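/- Let X, Y be real Banach spaces and F : B_X → B_Y a non-expansive bijection. Then F⁻¹(S_Y) ⊆ S_X, i.e., if ‖F(x)‖ = 1 then ‖x‖ = 1. -/
import Mathlib


theorem nonexpansive_bijection_preimage_sphere_subset_sphere
    {X Y : Type*} [NormedAddCommGroup X] [NormedSpace ℝ X] [CompleteSpace X]
    [NormedAddCommGroup Y] [NormedSpace ℝ Y] [CompleteSpace Y]
    (F : Metric.closedBall (0 : X) 1 → Metric.closedBall (0 : Y) 1)
    (hbij : Function.Bijective F)
    (hne : ∀ u v : Metric.closedBall (0 : X) 1,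
      ‖(F u : Y) - (F v : Y)‖ ≤ ‖(u : X) - (v : X)‖) :
    ∀ x : Metric.closedBall (0 : X) 1, ‖(F x : Y)‖ = 1 → ‖(x : X)‖ = 1 := by
  intro x hx
  have hmem : (-(F x : Y)) ∈ Metric.closedBall (0 : Y) 1 := by
    simpa [mem_closedBall_zero_iff, hx] using le_refl (1 : ℝ)
  obtain ⟨u, hu⟩ := hbij.2 ⟨-(F x : Y), hmem⟩
  have h1 : ‖(F x : Y) - (F u : Y)‖ ≤ ‖(x : X) - (u : X)‖ := hne x u
  have h2 : ((F u : Y)) = -(F x : Y) := by rw [hu]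
  have hxn : ‖(x : X)‖ ≤ 1 := mem_closedBall_zero_iff.mp x.2
  have hun : ‖(u : X)‖ ≤ 1 := mem_closedBall_zero_iff.mp u.2
  have h3 : (2 : ℝ) ≤ ‖(x : X) - (u : X)‖ := by
    rw [h2, sub_neg_eq_add] at h1
    calc (2 : ℝ) = ‖(F x : Y)‖ + ‖(F x : Y)‖ := by rw [hx]; norm_num
    _ = ‖(F x : Y) + (F x : Y)‖ := by rw [← two_smul ℝ (F x : Y), norm_smul]; simp [hx]; norm_num
    _ ≤ ‖(x : X) - (u : X)‖ := h1
  have h4 : ‖(x : X) - (u : X)‖ ≤ ‖(x : X)‖ + ‖(u : X)‖ := norm_sub_le _ _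
  linarith
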